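/- For f := τ̂_DiM − τ on Ω, the expected carré du champ under the uniform distribution equals E_π[Γ(f)] = (n/(n−1)) · ( Var₁/n₁² + Var₀/n₀² + 2 Cov_diff/(n₁ n₀) ), where Var_α := (1/n) Σ_{i=1}^n (y_i^{(α)} − ȳ^{(α)})² for α ∈ {0,1} and Cov_diff := (1/n) Σ_{i=1}^n (y_i^{(1)} − ȳ^{(1)})(y_i^{(0)} − ȳ^{(0)}), with ȳ^{(α)} := (1/n) Σ_i y_i^{(α)}. -/

import Mathlib

open Finset

noncomputable section

/-- `Ω`: the collection of `m`-element subsets of `{1,…,n}`, as a `Finset`. -/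
def ΩsetJ (n m : ℕ) : Finset (Finset (Fin n)) := Finset.powersetCard m Finset.univ

/-- Expectation with respect to the uniform distribution `π` on `Ω`. -/
def EpiJ (n m : ℕ) (g : Finset (Fin n) → ℝ) : ℝ :=
  ((ΩsetJ n m).card : ℝ)⁻¹ * ∑ S ∈ ΩsetJ n m, g S

/-- The one-swap (Johnson) kernel: `P(S,S') = 1/(m(n−m))` if `|S ∩ S'| = m−1`, else `0`. -/
def johnsonP (n m : ℕ) (S S' : Finset (Fin n)) : ℝ :=
  if (S ∩ S').card = m - 1 then ((m * (n - m) : ℕ) : ℝ)⁻¹ else 0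

/-- Carré du champ `Γ(f)(S) = (1/2) Σ_{S'} P(S,S') (f(S') − f(S))²`. -/
def gammaJ (n m : ℕ) (f : Finset (Fin n) → ℝ) (S : Finset (Fin n)) : ℝ :=
  (1 / 2) * ∑ S' ∈ ΩsetJ n m, johnsonP n m S S' * (f S' - f S) ^ 2

/-- Variance with respect to the uniform distribution `π` on `Ω`. -/
def VarJ (n m : ℕ) (f : Finset (Fin n) → ℝ) : ℝ :=
  EpiJ n m fun S => (f S - EpiJ n m f) ^ 2

/-- Generator `(Lf)(S) = Σ_{S'} P(S,S') f(S') − f(S)`. -/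
def LopJ (n m : ℕ) (f : Finset (Fin n) → ℝ) (S : Finset (Fin n)) : ℝ :=
  (∑ S' ∈ ΩsetJ n m, johnsonP n m S S' * f S') - f S

end

/-- The difference-in-means estimator. -/
noncomputable def tauDiM {n : ℕ} (n₁ n₀ : ℕ) (y1 y0 : Fin n → ℝ)
    (S : Finset (Fin n)) : ℝ :=
  (n₁ : ℝ)⁻¹ * ∑ i ∈ S, y1 i - (n₀ : ℝ)⁻¹ * ∑ j ∈ Sᶜ, y0 j

/-- Finite-population mean. -/
noncomputable def fpMean {n : ℕ} (a : Fin n → ℝ) : ℝ := (n : ℝ)⁻¹ * ∑ i, a i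

/-- Finite-population variance. -/
noncomputable def fpVar {n : ℕ} (a : Fin n → ℝ) : ℝ :=
  (n : ℝ)⁻¹ * ∑ i, (a i - fpMean a) ^ 2

/-- Finite-population covariance. -/
noncomputable def fpCov {n : ℕ} (a b : Fin n → ℝ) : ℝ :=
  (n : ℝ)⁻¹ * ∑ i, (a i - fpMean a) * (b i - fpMean b)

open Finset

section AuxLemmas

variable {n : ℕ}

lemma my_mem_Omega {m : ℕ} {S : Finset (Fin n)} : S ∈ ΩsetJ n m ↔ S.card = m := by
  simp [ΩsetJ, Finset.mem_powersetCard_univ]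

lemma my_swap_filter_eq_image {m : ℕ} (hm : 1 ≤ m) {S : Finset (Fin n)} (hS : S.card = m) :
    (ΩsetJ n m).filter (fun S' => (S ∩ S').card = m - 1)
      = (S ×ˢ Sᶜ).image (fun p => insert p.2 (S.erase p.1)) := by
  ext S'
  simp only [mem_filter, mem_image, mem_product, mem_compl, my_mem_Omega]
  constructor
  · rintro ⟨hc, hi⟩
    have h1 : (S \ S').card = 1 := by
      have := Finset.card_sdiff_add_card_inter S S'
      omega
    have h2 : (S' \ S).card = 1 := by
      have := Finset.card_sdiff_add_card_inter S' S
      rw [Finset.inter_comm] at this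
      omega
    obtain ⟨i, hi1⟩ := Finset.card_eq_one.mp h1
    obtain ⟨j, hj1⟩ := Finset.card_eq_one.mp h2
    have hiS : i ∈ S ∧ i ∉ S' := by
      have : i ∈ S \ S' := hi1 ▸ Finset.mem_singleton_self i
      exact Finset.mem_sdiff.mp this
    have hjS : j ∈ S' ∧ j ∉ S := by
      have : j ∈ S' \ S := hj1 ▸ Finset.mem_singleton_self j
      exact Finset.mem_sdiff.mp this
    refine ⟨⟨i, j⟩, ⟨hiS.1, hjS.2⟩, ?_⟩
    ext x
    simp only [Finset.mem_insert, Finset.mem_erase]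
    constructor
    · rintro (rfl | ⟨hx, hxS⟩)
      · exact hjS.1
      · by_contra hxS'
        have hmem : x ∈ S \ S' := Finset.mem_sdiff.mpr ⟨hxS, hxS'⟩
        rw [hi1] at hmem
        exact hx (Finset.mem_singleton.mp hmem)
    · intro hx
      by_cases hxS : x ∈ S
      · refine Or.inr ⟨?_, hxS⟩
        rintro rfl
        exact hiS.2 hx
      · left
        have hmem : x ∈ S' \ S := Finset.mem_sdiff.mpr ⟨hx, hxS⟩
        rw [hj1] at hmem
        exact Finset.mem_singleton.mp hmem
  · rintro ⟨⟨i, j⟩, ⟨hi, hj⟩, rfl⟩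
    have hji : j ∉ S.erase i := fun h => hj (Finset.mem_of_mem_erase h)
    constructor
    · rw [Finset.card_insert_of_notMem hji, Finset.card_erase_of_mem hi, hS]
      omega
    · have heq : S ∩ insert j (S.erase i) = S.erase i := by
        ext x
        simp only [Finset.mem_inter, Finset.mem_insert, Finset.mem_erase]
        constructor
        · rintro ⟨hxS, (rfl | h)⟩
          · exact absurd hxS hj
          · exact h
        · intro h
          exact ⟨h.2, Or.inr h⟩
      rw [heq, Finset.card_erase_of_mem hi, hS]

lemma my_swap_inj {S : Finset (Fin n)} :
    ∀ p ∈ S ×ˢ Sᶜ, ∀ q ∈ S ×ˢ Sᶜ,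
      insert p.2 (S.erase p.1) = insert q.2 (S.erase q.1) → p = q := by
  rintro ⟨i, j⟩ hij ⟨i', j'⟩ hij' h
  simp only [mem_product, mem_compl] at hij hij'
  simp only at h
  have hjj : j = j' := by
    have hj : j ∈ insert j' (S.erase i') := h ▸ Finset.mem_insert_self j _
    rcases Finset.mem_insert.mp hj with h' | h'
    · exact h'
    · exact absurd (Finset.mem_of_mem_erase h') hij.2
  subst hjj
  have hjni : j ∉ S.erase i := fun hc => hij.2 (Finset.mem_of_mem_erase hc)
  have hjni' : j ∉ S.erase i' := fun hc => hij'.2 (Finset.mem_of_mem_erase hc)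
  have herase : S.erase i = S.erase i' := by
    have := congrArg (fun t => t.erase j) h
    simpa [Finset.erase_insert hjni, Finset.erase_insert hjni'] using this
  have : i = i' := by
    by_contra hne
    have : i' ∈ S.erase i := Finset.mem_erase.mpr ⟨fun hc => hne hc.symm, hij'.1⟩
    rw [herase] at this
    exact (Finset.mem_erase.mp this).1 rfl
  simp [this]

lemma my_tau_diff {n₁ n₀ : ℕ} (y1 y0 : Fin n → ℝ) {S : Finset (Fin n)} {i j : Fin n}
    (hi : i ∈ S) (hj : j ∉ S) :
    tauDiM n₁ n₀ y1 y0 (insert j (S.erase i)) - tauDiM n₁ n₀ y1 y0 S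
      = ((n₁ : ℝ)⁻¹ * y1 j + (n₀ : ℝ)⁻¹ * y0 j) - ((n₁ : ℝ)⁻¹ * y1 i + (n₀ : ℝ)⁻¹ * y0 i) := by
  have hji : j ∉ S.erase i := fun h => hj (Finset.mem_of_mem_erase h)
  have hic : i ∉ Sᶜ := by simp [hi]
  have hjc : j ∈ insert i Sᶜ := Finset.mem_insert_of_mem (Finset.mem_compl.mpr hj)
  have h1 : ∑ x ∈ insert j (S.erase i), y1 x = ∑ x ∈ S, y1 x + y1 j - y1 i := by
    rw [Finset.sum_insert hji, Finset.sum_erase_eq_sub hi]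
    ring
  have h2 : ∑ x ∈ (insert j (S.erase i))ᶜ, y0 x = ∑ x ∈ Sᶜ, y0 x + y0 i - y0 j := by
    rw [Finset.compl_insert, Finset.compl_erase, Finset.sum_erase_eq_sub hjc,
      Finset.sum_insert hic]
    ring
  unfold tauDiM
  rw [h1, h2]
  ring

lemma my_gamma_formula {m : ℕ} (hm : 1 ≤ m) (f : Finset (Fin n) → ℝ) {S : Finset (Fin n)}
    (hS : S.card = m) :
    gammaJ n m f S = (1 / 2) * ((m * (n - m) : ℕ) : ℝ)⁻¹ *
      ∑ p ∈ S ×ˢ Sᶜ, (f (insert p.2 (S.erase p.1)) - f S) ^ 2 := by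
  unfold gammaJ johnsonP
  have step : ∀ S' ∈ ΩsetJ n m,
      (if (S ∩ S').card = m - 1 then ((m * (n - m) : ℕ) : ℝ)⁻¹ else 0) * (f S' - f S) ^ 2
        = if (S ∩ S').card = m - 1 then ((m * (n - m) : ℕ) : ℝ)⁻¹ * (f S' - f S) ^ 2 else 0 := by
    intro S' _
    split <;> simp
  rw [Finset.sum_congr rfl step, ← Finset.sum_filter, my_swap_filter_eq_image hm hS,
    Finset.sum_image my_swap_inj, ← Finset.mul_sum, ← mul_assoc]

lemma my_count_filter {m : ℕ} (hm : 1 ≤ m) {i j : Fin n} (hij : i ≠ j) :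
    ((ΩsetJ n m).filter (fun S => i ∈ S ∧ j ∉ S)).card = (n - 2).choose (m - 1) := by
  have hcard : ((ΩsetJ n m).filter (fun S => i ∈ S ∧ j ∉ S)).card
      = (Finset.powersetCard (m - 1) ((univ.erase j).erase i)).card := by
    apply Finset.card_nbij' (fun S => S.erase i) (fun T => insert i T)
    · intro S hS
      simp only [mem_coe, mem_filter, my_mem_Omega] at hS
      rw [Finset.mem_coe, Finset.mem_powersetCard]
      constructor
      · intro x hx
        have hx' := Finset.mem_erase.mp hx
        exact Finset.mem_erase.mpr ⟨hx'.1,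
          Finset.mem_erase.mpr ⟨fun hc => hS.2.2 (hc ▸ hx'.2), Finset.mem_univ x⟩⟩
      · rw [Finset.card_erase_of_mem hS.2.1, hS.1]
    · intro T hT
      rw [Finset.mem_coe, Finset.mem_powersetCard] at hT
      have hiT : i ∉ T := fun hc => (Finset.mem_erase.mp (hT.1 hc)).1 rfl
      have hjT : j ∉ T := fun hc =>
        (Finset.mem_erase.mp (Finset.mem_of_mem_erase (hT.1 hc))).1 rfl
      simp only [mem_coe, mem_filter, my_mem_Omega]
      refine ⟨?_, Finset.mem_insert_self i T, ?_⟩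
      · rw [Finset.card_insert_of_notMem hiT, hT.2]
        omega
      · intro hc
        rcases Finset.mem_insert.mp hc with h' | h'
        · exact hij h'.symm
        · exact hjT h'
    · intro S hS
      simp only [mem_coe, mem_filter] at hS
      exact Finset.insert_erase hS.2.1
    · intro T hT
      rw [Finset.mem_coe, Finset.mem_powersetCard] at hT
      exact Finset.erase_insert (fun hc => (Finset.mem_erase.mp (hT.1 hc)).1 rfl)
  rw [hcard, Finset.card_powersetCard]
  congr 1
  rw [Finset.card_erase_of_mem (Finset.mem_erase.mpr ⟨hij, Finset.mem_univ i⟩),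
    Finset.card_erase_of_mem (Finset.mem_univ j), Finset.card_univ, Fintype.card_fin]
  omega

lemma my_choose_identity (k m : ℕ) :
    ((k + 1) * (m + 1)) * (k + m + 2).choose (k + 1)
      = (k + m + 2) * (k + m + 1) * (k + m).choose k := by
  have h1 : (k + m + 2) * (k + m + 1).choose k = (k + m + 2).choose (k + 1) * (k + 1) :=
    Nat.add_one_mul_choose_eq (k + m + 1) k
  have h2 : (k + m + 1) * (k + m).choose m = (k + m + 1).choose (m + 1) * (m + 1) :=
    Nat.add_one_mul_choose_eq (k + m) m
  have h3 : (k + m + 1).choose (m + 1) = (k + m + 1).choose k := by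
    rw [← Nat.choose_symm (by omega : k ≤ k + m + 1)]
    congr 1
    omega
  have h4 : (k + m).choose m = (k + m).choose k := by
    rw [← Nat.choose_symm (by omega : k ≤ k + m)]
    congr 1
    omega
  calc ((k + 1) * (m + 1)) * (k + m + 2).choose (k + 1)
      = (m + 1) * ((k + m + 2).choose (k + 1) * (k + 1)) := by ring
    _ = (m + 1) * ((k + m + 2) * (k + m + 1).choose k) := by rw [← h1]
    _ = (k + m + 2) * ((k + m + 1).choose k * (m + 1)) := by ring
    _ = (k + m + 2) * ((k + m + 1).choose (m + 1) * (m + 1)) := by rw [h3]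
    _ = (k + m + 2) * ((k + m + 1) * (k + m).choose m) := by rw [← h2]
    _ = (k + m + 2) * (k + m + 1) * (k + m).choose k := by rw [h4]; ring

end AuxLemmas

theorem stmt17 {n n₁ : ℕ} (hn : 2 ≤ n) (h1 : 1 ≤ n₁) (h2 : n₁ ≤ n - 1)
    (y1 y0 : Fin n → ℝ) :
    EpiJ n n₁ (gammaJ n n₁ fun S =>
        tauDiM n₁ (n - n₁) y1 y0 S - (n : ℝ)⁻¹ * ∑ i, (y1 i - y0 i))
      = (n : ℝ) / ((n : ℝ) - 1) *
          (fpVar y1 / (n₁ : ℝ) ^ 2 + fpVar y0 / ((n - n₁ : ℕ) : ℝ) ^ 2 +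
            2 * fpCov y1 y0 / ((n₁ : ℝ) * ((n - n₁ : ℕ) : ℝ))) := by
  have hn₁n : n₁ < n := by omega
  have hn₀1 : 1 ≤ n - n₁ := by omega
  set n₀ := n - n₁ with hn₀
  set Z : Fin n → ℝ := fun x => (n₁ : ℝ)⁻¹ * y1 x + (n₀ : ℝ)⁻¹ * y0 x with hZ
  set f : Finset (Fin n) → ℝ := fun S =>
    tauDiM n₁ n₀ y1 y0 S - (n : ℝ)⁻¹ * ∑ i, (y1 i - y0 i) with hf
  -- nonzero facts
  have hnR : (n : ℝ) ≠ 0 := by positivity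
  have hn1R : (n₁ : ℝ) ≠ 0 := by positivity
  have hn0R : (n₀ : ℝ) ≠ 0 := by
    have : 0 < n₀ := hn₀1
    positivity
  have hnm1R : (n : ℝ) - 1 ≠ 0 := by
    have : (2 : ℝ) ≤ (n : ℝ) := by exact_mod_cast hn
    linarith
  have hCnR : ((n.choose n₁ : ℕ) : ℝ) ≠ 0 := by
    exact_mod_cast (Nat.choose_pos hn₁n.le).ne'
  -- difference of f along a swap
  have fdiff : ∀ S : Finset (Fin n), ∀ p ∈ S ×ˢ Sᶜ,
      (f (insert p.2 (S.erase p.1)) - f S) ^ 2 = (Z p.2 - Z p.1) ^ 2 := by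
    rintro S ⟨i, j⟩ hp
    simp only [mem_product, mem_compl] at hp
    have := my_tau_diff (n₁ := n₁) (n₀ := n₀) y1 y0 hp.1 hp.2
    simp only [hf, hZ]
    congr 1
    rw [show ∀ a b c : ℝ, a - c - (b - c) = a - b from fun a b c => by ring]
    exact this
  -- pointwise Γ
  have hgamma : ∀ S ∈ ΩsetJ n n₁, gammaJ n n₁ f S
      = (1 / 2) * ((n₁ * n₀ : ℕ) : ℝ)⁻¹ * ∑ p ∈ S ×ˢ Sᶜ, (Z p.2 - Z p.1) ^ 2 := by
    intro S hS
    rw [my_gamma_formula h1 f (my_mem_Omega.mp hS)]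
    rw [Finset.sum_congr rfl (fdiff S)]
  -- swap the two sums
  have hswap : ∑ S ∈ ΩsetJ n n₁, ∑ p ∈ S ×ˢ Sᶜ, (Z p.2 - Z p.1) ^ 2
      = (((n - 2).choose (n₁ - 1) : ℕ) : ℝ) * ∑ i, ∑ j, (Z j - Z i) ^ 2 := by
    have hin : ∀ S : Finset (Fin n), ∑ p ∈ S ×ˢ Sᶜ, (Z p.2 - Z p.1) ^ 2
        = ∑ i, ∑ j, if i ∈ S ∧ j ∉ S then (Z j - Z i) ^ 2 else 0 := by
      intro S
      rw [Finset.sum_product]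
      rw [show (∑ i ∈ S, ∑ j ∈ Sᶜ, (Z j - Z i) ^ 2)
          = ∑ i ∈ univ ∩ S, ∑ j ∈ univ ∩ Sᶜ, (Z j - Z i) ^ 2 by
        rw [Finset.univ_inter, Finset.univ_inter]]
      rw [← Finset.sum_ite_mem univ S]
      refine Finset.sum_congr rfl fun i _ => ?_
      rw [show (∑ j ∈ univ ∩ Sᶜ, (Z j - Z i) ^ 2)
          = ∑ j : Fin n, if j ∈ Sᶜ then (Z j - Z i) ^ 2 else 0 from
        (Finset.sum_ite_mem univ Sᶜ _).symm]
      split_ifs with hiS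
      · refine Finset.sum_congr rfl fun j _ => ?_
        simp [Finset.mem_compl, hiS]
      · exact (Finset.sum_eq_zero fun j _ => by simp [hiS]).symm
    simp only [hin]
    refine Eq.trans Finset.sum_comm ?_
    rw [Finset.mul_sum]
    refine Finset.sum_congr rfl fun i _ => ?_
    refine Eq.trans Finset.sum_comm ?_
    rw [Finset.mul_sum]
    refine Finset.sum_congr rfl fun j _ => ?_
    rw [← Finset.sum_filter, Finset.sum_const, nsmul_eq_mul]
    rcases eq_or_ne i j with rfl | hij
    · have : (ΩsetJ n n₁).filter (fun S => i ∈ S ∧ i ∉ S) = ∅ := by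
        apply Finset.filter_false_of_mem
        intro S _ h
        exact h.2 h.1
      simp [this]
    · rw [my_count_filter h1 hij]
  -- sum of squared differences
  have hsq : ∑ i, ∑ j, (Z j - Z i) ^ 2
      = 2 * (n : ℝ) * (∑ k, Z k ^ 2) - 2 * (∑ k, Z k) ^ 2 := by
    have e1 : ∀ i : Fin n, ∑ j, (Z j - Z i) ^ 2
        = (∑ k, Z k ^ 2) - 2 * (∑ k, Z k) * Z i + (n : ℝ) * Z i ^ 2 := by
      intro i
      have e0 : ∀ j : Fin n, (Z j - Z i) ^ 2 = Z j ^ 2 - 2 * Z i * Z j + Z i ^ 2 :=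
        fun j => by ring
      simp only [e0, Finset.sum_add_distrib, Finset.sum_sub_distrib, ← Finset.mul_sum,
        Finset.sum_const, Finset.card_univ, Fintype.card_fin, nsmul_eq_mul]
      ring
    simp only [e1, Finset.sum_add_distrib, Finset.sum_sub_distrib, ← Finset.mul_sum,
      Finset.sum_const, Finset.card_univ, Fintype.card_fin, nsmul_eq_mul]
    ring
  -- centered sum
  have hcent : ∑ i, (Z i - (n : ℝ)⁻¹ * ∑ k, Z k) ^ 2
      = (∑ k, Z k ^ 2) - (n : ℝ)⁻¹ * (∑ k, Z k) ^ 2 := by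
    have e0 : ∀ i : Fin n, (Z i - (n : ℝ)⁻¹ * ∑ k, Z k) ^ 2
        = Z i ^ 2 - 2 * ((n : ℝ)⁻¹ * ∑ k, Z k) * Z i + ((n : ℝ)⁻¹ * ∑ k, Z k) ^ 2 :=
      fun i => by ring
    simp only [e0, Finset.sum_add_distrib, Finset.sum_sub_distrib, ← Finset.mul_sum,
      Finset.sum_const, Finset.card_univ, Fintype.card_fin, nsmul_eq_mul]
    field_simp
    ring
  -- bridge to fpVar / fpCov
  have hW : ∀ i : Fin n, Z i - (n : ℝ)⁻¹ * ∑ k, Z k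
      = (n₁ : ℝ)⁻¹ * (y1 i - fpMean y1) + (n₀ : ℝ)⁻¹ * (y0 i - fpMean y0) := by
    intro i
    simp only [hZ, fpMean, Finset.sum_add_distrib, ← Finset.mul_sum]
    ring
  have hbridge : fpVar y1 / (n₁ : ℝ) ^ 2 + fpVar y0 / (n₀ : ℝ) ^ 2
        + 2 * fpCov y1 y0 / ((n₁ : ℝ) * (n₀ : ℝ))
      = (n : ℝ)⁻¹ * ∑ i, (Z i - (n : ℝ)⁻¹ * ∑ k, Z k) ^ 2 := by
    have expand : ∀ i : Fin n,
        ((n₁ : ℝ)⁻¹ * (y1 i - fpMean y1) + (n₀ : ℝ)⁻¹ * (y0 i - fpMean y0)) ^ 2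
          = ((n₁ : ℝ)⁻¹ * (n₁ : ℝ)⁻¹) * (y1 i - fpMean y1) ^ 2
            + ((n₀ : ℝ)⁻¹ * (n₀ : ℝ)⁻¹) * (y0 i - fpMean y0) ^ 2
            + (2 * ((n₁ : ℝ)⁻¹ * (n₀ : ℝ)⁻¹)) * ((y1 i - fpMean y1) * (y0 i - fpMean y0)) :=
      fun i => by ring
    simp only [hW, expand, Finset.sum_add_distrib, ← Finset.mul_sum]
    simp only [fpVar, fpCov]
    field_simp
  -- the choose identity
  have hchoose : ((n₁ * n₀) * n.choose n₁ : ℕ) = (n * (n - 1)) * (n - 2).choose (n₁ - 1) := by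
    obtain ⟨k, hk⟩ : ∃ k, n₁ = k + 1 := ⟨n₁ - 1, by omega⟩
    obtain ⟨m, hm⟩ : ∃ m, n₀ = m + 1 := ⟨n₀ - 1, by omega⟩
    have hnval : n = k + m + 2 := by omega
    have h3 : n - 1 = k + m + 1 := by omega
    have h4 : n - 2 = k + m := by omega
    have h5 : n₁ - 1 = k := by omega
    rw [h3, h4, h5, hk, hm, hnval]
    exact my_choose_identity k m
  have hchooseR : ((n₁ : ℝ) * (n₀ : ℝ)) * ((n.choose n₁ : ℕ) : ℝ)
      = (n : ℝ) * ((n : ℝ) - 1) * (((n - 2).choose (n₁ - 1) : ℕ) : ℝ) := by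
    have := congrArg (fun x : ℕ => (x : ℝ)) hchoose
    push_cast at this
    rw [Nat.cast_sub (by omega : 1 ≤ n)] at this
    push_cast at this
    linarith [this]
  have hC2R : (((n - 2).choose (n₁ - 1) : ℕ) : ℝ)
      = ((n₁ : ℝ) * (n₀ : ℝ)) * ((n.choose n₁ : ℕ) : ℝ) / ((n : ℝ) * ((n : ℝ) - 1)) := by
    field_simp
    linarith [hchooseR]
  -- assembly
  rw [EpiJ, Finset.sum_congr rfl hgamma, ← Finset.mul_sum, hswap, hsq]
  have hcardΩ : ((ΩsetJ n n₁).card : ℝ) = ((n.choose n₁ : ℕ) : ℝ) := by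
    simp [ΩsetJ, Finset.card_powersetCard]
  rw [hcardΩ, hbridge, hcent]
  have hcastmul : ((n₁ * n₀ : ℕ) : ℝ) = (n₁ : ℝ) * (n₀ : ℝ) := by push_cast; ring
  rw [hcastmul, hC2R]
  field_simp
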